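/- Every right-closing cellular automaton of radius 1 on A^{Σ*} with |Σ| = 2 is an open map. -/

import Mathlib

open Function

variable {Sig A : Type*}

/-- Configurations over the tree `Sig*`: maps from the free monoid (lists) to `A`. -/
abbrev Config (Sig A : Type*) := List Sig → A

/-- Shift action: `(shift f v) w = f (v ++ w)`. -/
def shift (f : Config Sig A) (v : List Sig) : Config Sig A := fun w => f (v ++ w)

/-- `Delta Sig n` is the set of words of length `< n` (i.e. `Δ_n`). -/
def Delta (Sig : Type*) (n : ℕ) : Type _ := {w : List Sig // w.length < n}

/-- Restriction of a configuration to `Δ_n`. -/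
def restrict (f : Config Sig A) (n : ℕ) : Delta Sig n → A := fun w => f w.val

/-- The CA defined by a local map `μ` of radius `r`. -/
def caMap (r : ℕ) (μ : (Delta Sig (r + 1) → A) → A) : Config Sig A → Config Sig A :=
  fun f v => μ (restrict (shift f v) (r + 1))

/-- `τ` is a cellular automaton: it admits a radius `r ≥ 1` and a local defining map. -/
def IsCA (τ : Config Sig A → Config Sig A) : Prop :=
  ∃ r : ℕ, 1 ≤ r ∧ ∃ μ : (Delta Sig (r + 1) → A) → A,
    ∀ (f : Config Sig A) (v : List Sig), τ f v = μ (restrict (shift f v) (r + 1))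

/-- A subshift: a closed, shift-invariant set of configurations. -/
def IsSubshift [TopologicalSpace A] (X : Set (Config Sig A)) : Prop :=
  IsClosed X ∧ ∀ f ∈ X, ∀ v : List Sig, shift f v ∈ X

/-- The blocks of size `n` of `X`. -/
def blockSet (X : Set (Config Sig A)) (n : ℕ) : Set (Delta Sig n → A) :=
  {p | ∃ f ∈ X, restrict f n = p}

/-- Positive expansiveness with constant `N`. -/
def PosExpansive (τ : Config Sig A → Config Sig A) (N : ℕ) : Prop :=
  1 ≤ N ∧ ∀ f₁ f₂ : Config Sig A, f₁ ≠ f₂ →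
    ∃ t : ℕ, restrict (τ^[t] f₁) N ≠ restrict (τ^[t] f₂) N

/-- The set `P(τ, n, t)` of `t`-tuples of traces on `Δ_n`. -/
def Pset (τ : Config Sig A → Config Sig A) (n t : ℕ) : Set (Fin t → Delta Sig n → A) :=
  {s | ∃ f : Config Sig A, ∀ i : Fin t, s i = restrict (τ^[(i : ℕ)] f) n}

/-- The block `a ◁ p` on `Δ_{r+1}` with root value `a` and agreeing with `p` elsewhere. -/
def rootIns (r : ℕ) (a : A) (p : {w : List Sig // w.length < r + 1 ∧ w ≠ []} → A) :
    Delta Sig (r + 1) → A :=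
  fun w => if h : w.val.length = 0 then a else
    p ⟨w.val, ⟨w.2, fun he => h (by simp [he])⟩⟩

/-- Permutivity: for every pattern on `Δ_{r+1} \ {ε}`, the induced map on root values is
a permutation of `A`. -/
def Permutive (r : ℕ) (μ : (Delta Sig (r + 1) → A) → A) : Prop :=
  ∀ p : {w : List Sig // w.length < r + 1 ∧ w ≠ []} → A,
    Function.Bijective (fun a : A => μ (rootIns r a p))

/-- The image under the local map `μ` of a block of size `n + r`: a block of size `n`. -/
def blockImage (r n : ℕ) (μ : (Delta Sig (r + 1) → A) → A)
    (p : Delta Sig (n + r) → A) : Delta Sig n → A :=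
  fun v => μ (fun w => p ⟨v.val ++ w.val, by
    have hv := v.2; have hw := w.2
    simp only [List.length_append]; omega⟩)

/-- A diamond of `(r, μ)`: two distinct blocks of size `n = m + r > 2r + 2` coinciding
with a block `p ∈ A^{Δ_r}` on `Δ_r` and on `vΔ_r` for every `v` of length `m = n - r`,
with the same image under `μ`. -/
def HasDiamond (r : ℕ) (μ : (Delta Sig (r + 1) → A) → A) : Prop :=
  ∃ (m : ℕ) (_ : r + 2 < m) (p : Delta Sig r → A)
    (p₁ p₂ : Delta Sig (m + r) → A),
    p₁ ≠ p₂ ∧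
    (∀ w : Delta Sig r,
      p₁ ⟨w.val, by have := w.2; omega⟩ = p w ∧
      p₂ ⟨w.val, by have := w.2; omega⟩ = p w) ∧
    (∀ v : List Sig, ∀ hv : v.length = m, ∀ w : Delta Sig r,
      p₁ ⟨v ++ w.val, by have := w.2; simp only [List.length_append]; omega⟩ = p w ∧
      p₂ ⟨v ++ w.val, by have := w.2; simp only [List.length_append]; omega⟩ = p w) ∧
    blockImage r m μ p₁ = blockImage r m μ p₂

/-- Right-closingness of the CA `caMap r μ`. -/
def RightClosing (r : ℕ) (μ : (Delta Sig (r + 1) → A) → A) : Prop :=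
  ∃ N : ℕ, ∀ (p : Delta Sig r → A) (q : Delta Sig (r * N) → A),
    (∃ f : Config Sig A, restrict f r = p ∧ restrict (caMap r μ f) (r * N) = q) →
    ∃! ps : {v : List Sig // v.length = r} → Delta Sig r → A,
      ∀ f : Config Sig A, restrict f r = p → restrict (caMap r μ f) (r * N) = q →
        ∀ (v : {v : List Sig // v.length = r}) (w : Delta Sig r),
          f (v.val ++ w.val) = ps v w



namespace RCopen

open Function

variable {A : Type*}

/-- The depth-2 block with root `a` and children `b`, `c`. -/
def blockOf (a b c : A) : Delta (Fin 2) (1 + 1) → A :=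
  fun w => if w.val = [] then a else if w.val = [0] then b else c

lemma delta2_cases (w : Delta (Fin 2) (1 + 1)) :
    w.val = [] ∨ w.val = [0] ∨ w.val = [1] := by
  obtain ⟨l, hl⟩ := w
  match l, hl with
  | [], _ => exact Or.inl rfl
  | [i], _ => fin_cases i
              · exact Or.inr (Or.inl rfl)
              · exact Or.inr (Or.inr rfl)
  | (i :: j :: t), hl => simp at hl

lemma delta1_val (w : Delta (Fin 2) 1) : w.val = [] := by
  obtain ⟨l, hl⟩ := w
  match l, hl with
  | [], _ => rfl
  | (i :: t), hl => simp at hl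

lemma shift_shift (f : Config (Fin 2) A) (v w : List (Fin 2)) :
    shift (shift f v) w = shift f (v ++ w) := by
  funext u; simp [shift, List.append_assoc]

lemma restrict_shift_eq (f : Config (Fin 2) A) (v : List (Fin 2)) :
    restrict (shift f v) (1 + 1) = blockOf (f v) (f (v ++ [0])) (f (v ++ [1])) := by
  funext w
  rcases delta2_cases w with hw | hw | hw <;>
    simp [restrict, shift, blockOf, hw]

variable (μ : (Delta (Fin 2) (1 + 1) → A) → A)

lemma caMap_apply (f : Config (Fin 2) A) (v : List (Fin 2)) :
    caMap 1 μ f v = μ (blockOf (f v) (f (v ++ [0])) (f (v ++ [1]))) := by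
  show μ (restrict (shift f v) (1 + 1)) = _
  rw [restrict_shift_eq]

lemma caMap_shift (f : Config (Fin 2) A) (v : List (Fin 2)) :
    caMap 1 μ (shift f v) = shift (caMap 1 μ f) v := by
  funext w
  show μ (restrict (shift (shift f v) w) (1 + 1)) = μ (restrict (shift f (v ++ w)) (1 + 1))
  rw [shift_shift]

/-- Graft two configurations under a new root value. -/
def graft (a : A) (g h : Config (Fin 2) A) : Config (Fin 2) A :=
  fun v => match v with
  | [] => a
  | (i :: w) => if i = 0 then g w else h w

@[simp] lemma graft_nil (a : A) (g h : Config (Fin 2) A) : graft a g h [] = a := rfl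

@[simp] lemma graft_cons (a : A) (g h : Config (Fin 2) A) (i : Fin 2) (w : List (Fin 2)) :
    graft a g h (i :: w) = if i = 0 then g w else h w := rfl

lemma shift_graft_zero (a : A) (g h : Config (Fin 2) A) :
    shift (graft a g h) [0] = g := by
  funext w; simp [shift, graft]

lemma shift_graft_one (a : A) (g h : Config (Fin 2) A) :
    shift (graft a g h) [1] = h := by
  funext w
  show graft a g h ([1] ++ w) = h w
  have : ([1] ++ w : List (Fin 2)) = (1 : Fin 2) :: w := rfl
  rw [this, graft_cons, if_neg (by decide)]

lemma caMap_graft (a : A) (g h : Config (Fin 2) A) :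
    caMap 1 μ (graft a g h)
      = graft (μ (blockOf a (g []) (h []))) (caMap 1 μ g) (caMap 1 μ h) := by
  funext v
  cases v with
  | nil =>
      rw [caMap_apply]
      have h0 : graft a g h ([] ++ [0]) = g [] := by simp
      have h1 : graft a g h ([] ++ [1]) = h [] := by
        show graft a g h [1] = h []
        rw [show ([1] : List (Fin 2)) = (1 : Fin 2) :: [] from rfl, graft_cons,
          if_neg (by decide)]
      rw [show graft a g h [] = a from rfl, h0, h1, graft_nil]
  | cons i w =>
      have hs : shift (graft a g h) (i :: w) = if i = 0 then shift g w else shift h w := by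
        funext u
        show graft a g h ((i :: w) ++ u) = _
        have : ((i :: w) ++ u : List (Fin 2)) = i :: (w ++ u) := rfl
        rw [this, graft_cons]
        by_cases hi : i = 0 <;> simp [hi, shift]
      show μ (restrict (shift (graft a g h) (i :: w)) (1 + 1)) = _
      rw [hs, graft_cons]
      by_cases hi : i = 0 <;> simp [hi] <;> rfl

section Counting0

variable [Fintype A]

open Classical in
/-- The set of root values of preimages of `g`. -/
noncomputable def uF (g : Config (Fin 2) A) : Finset A :=
  Finset.univ.filter (fun a => ∃ f : Config (Fin 2) A, caMap 1 μ f = g ∧ f [] = a)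

variable {μ}

lemma mem_uF {g : Config (Fin 2) A} {a : A} :
    a ∈ uF μ g ↔ ∃ f : Config (Fin 2) A, caMap 1 μ f = g ∧ f [] = a := by
  classical
  simp [uF]

end Counting0

section RC

variable {μ} (N : ℕ)
variable (hN : ∀ (p : Delta (Fin 2) 1 → A) (q : Delta (Fin 2) (1 * N) → A),
    (∃ f : Config (Fin 2) A, restrict f 1 = p ∧ restrict (caMap 1 μ f) (1 * N) = q) →
    ∃! ps : {v : List (Fin 2) // v.length = 1} → Delta (Fin 2) 1 → A,
      ∀ f : Config (Fin 2) A, restrict f 1 = p → restrict (caMap 1 μ f) (1 * N) = q →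
        ∀ (v : {v : List (Fin 2) // v.length = 1}) (w : Delta (Fin 2) 1),
          f (v.val ++ w.val) = ps v w)

include hN

lemma rc_children (f f' : Config (Fin 2) A) (h0 : f [] = f' [])
    (hc : caMap 1 μ f = caMap 1 μ f') (i : Fin 2) : f [i] = f' [i] := by
  obtain ⟨ps, hps, -⟩ :=
    hN (restrict f 1) (restrict (caMap 1 μ f) (1 * N)) ⟨f, rfl, rfl⟩
  have hrf : restrict f' 1 = restrict f 1 := by
    funext w
    show f' w.val = f w.val
    rw [delta1_val w]; exact h0.symm
  have h1 := hps f rfl rfl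
  have h2 := hps f' hrf (by rw [← hc])
  have e1 := h1 ⟨[i], by simp⟩ ⟨[], by simp⟩
  have e2 := h2 ⟨[i], by simp⟩ ⟨[], by simp⟩
  simp only [List.append_nil] at e1 e2
  rw [e1, e2]

lemma rc_ext (f f' : Config (Fin 2) A) (h0 : f [] = f' [])
    (hc : caMap 1 μ f = caMap 1 μ f') : f = f' := by
  funext v
  induction v using List.reverseRecOn with
  | nil => exact h0
  | append_singleton v i ih =>
      have hs0 : shift f v [] = shift f' v [] := by
        show f (v ++ []) = f' (v ++ [])
        simpa using ih
      have hsc : caMap 1 μ (shift f v) = caMap 1 μ (shift f' v) := by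
        rw [caMap_shift, caMap_shift, hc]
      exact rc_children N hN (shift f v) (shift f' v) hs0 hsc i

section Counting

variable [Fintype A]

variable {N}

lemma rect_inj {g₀ g₁ : Config (Fin 2) A} {z b c b' c' : A}
    (hb : b ∈ uF μ g₀) (hc : c ∈ uF μ g₁) (hb' : b' ∈ uF μ g₀) (hc' : c' ∈ uF μ g₁)
    (hμ : μ (blockOf z b c) = μ (blockOf z b' c')) : b = b' ∧ c = c' := by
  obtain ⟨fb, hfb, hfbr⟩ := mem_uF.mp hb
  obtain ⟨fc, hfc, hfcr⟩ := mem_uF.mp hc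
  obtain ⟨fb', hfb', hfbr'⟩ := mem_uF.mp hb'
  obtain ⟨fc', hfc', hfcr'⟩ := mem_uF.mp hc'
  have hF : caMap 1 μ (graft z fb fc) = caMap 1 μ (graft z fb' fc') := by
    rw [caMap_graft, caMap_graft, hfb, hfc, hfb', hfc', hfbr, hfcr, hfbr', hfcr', hμ]
  have hEq := rc_ext N hN (graft z fb fc) (graft z fb' fc') rfl hF
  constructor
  · have := congrFun hEq [0]
    simpa [hfbr, hfbr'] using this
  · have := congrFun hEq [1]
    rw [show ([1] : List (Fin 2)) = (1 : Fin 2) :: [] from rfl] at this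
    rw [graft_cons, graft_cons, if_neg (by decide), if_neg (by decide)] at this
    rw [← hfcr, ← hfcr']; exact this

lemma cnt (g₀ g₁ : Config (Fin 2) A) :
    ∑ d : A, (uF μ (graft d g₀ g₁)).card
      = Fintype.card A * ((uF μ g₀).card * (uF μ g₁).card) := by
  classical
  have hL : ∑ d : A, (uF μ (graft d g₀ g₁)).card
      = (Finset.univ.sigma (fun d : A => uF μ (graft d g₀ g₁))).card :=
    (Finset.card_sigma _ _).symm
  have hR : Fintype.card A * ((uF μ g₀).card * (uF μ g₁).card)
      = ((Finset.univ : Finset A) ×ˢ (uF μ g₀ ×ˢ uF μ g₁)).card := by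
    rw [Finset.card_product, Finset.card_product, Finset.card_univ]
  rw [hL, hR]
  refine (Finset.card_bij
    (i := fun (x : A × A × A) _ =>
      (⟨μ (blockOf x.1 x.2.1 x.2.2), x.1⟩ : Σ _ : A, A)) ?_ ?_ ?_).symm
  · rintro ⟨z, b, c⟩ hx
    rw [Finset.mem_product] at hx
    obtain ⟨-, hx⟩ := hx
    rw [Finset.mem_product] at hx
    obtain ⟨hb, hc⟩ := hx
    obtain ⟨fb, hfb, hfbr⟩ := mem_uF.mp hb
    obtain ⟨fc, hfc, hfcr⟩ := mem_uF.mp hc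
    refine Finset.mem_sigma.mpr ⟨Finset.mem_univ _, mem_uF.mpr ⟨graft z fb fc, ?_, rfl⟩⟩
    rw [caMap_graft, hfb, hfc, hfbr, hfcr]
  · rintro ⟨z, b, c⟩ hx ⟨z', b', c'⟩ hx' heq
    rw [Finset.mem_product] at hx hx'
    obtain ⟨-, hx⟩ := hx
    obtain ⟨-, hx'⟩ := hx'
    rw [Finset.mem_product] at hx hx'
    obtain ⟨hb, hc⟩ := hx
    obtain ⟨hb', hc'⟩ := hx'
    obtain ⟨hd, hz⟩ := Sigma.mk.inj_iff.mp heq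
    have hz' : z = z' := eq_of_heq hz
    subst hz'
    obtain ⟨hbb, hcc⟩ := rect_inj hN hb hc hb' hc' hd
    simp only [Prod.mk.injEq]
    exact ⟨trivial, hbb, hcc⟩
  · rintro ⟨d, z⟩ hdz
    rw [Finset.mem_sigma] at hdz
    obtain ⟨-, hz⟩ := hdz
    obtain ⟨F, hF, hFr⟩ := mem_uF.mp hz
    refine ⟨⟨z, F [0], F [1]⟩, ?_, ?_⟩
    · rw [Finset.mem_product]
      refine ⟨Finset.mem_univ _, ?_⟩
      rw [Finset.mem_product]
      constructor
      · refine mem_uF.mpr ⟨shift F [0], ?_, rfl⟩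
        rw [caMap_shift, hF, shift_graft_zero]
      · refine mem_uF.mpr ⟨shift F [1], ?_, rfl⟩
        rw [caMap_shift, hF, shift_graft_one]
    · have hd : μ (blockOf z (F [0]) (F [1])) = d := by
        have h1 : caMap 1 μ F [] = μ (blockOf (F []) (F [0]) (F [1])) := caMap_apply μ F []
        rw [hF, hFr] at h1
        exact h1.symm
      simp only [hd]

lemma uF_card_le_one (g : Config (Fin 2) A) [Nonempty A] : (uF μ g).card ≤ 1 := by
  classical
  set S : Set ℕ := Set.range (fun g : Config (Fin 2) A => (uF μ g).card) with hS
  have hbdd : BddAbove S := by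
    refine ⟨Fintype.card A, ?_⟩
    rintro _ ⟨g', rfl⟩
    exact le_trans (Finset.card_le_univ _) (le_of_eq Finset.card_univ)
  have hne : S.Nonempty := ⟨_, Set.mem_range_self (fun _ => Classical.arbitrary A)⟩
  obtain ⟨gm, hgm⟩ := Nat.sSup_mem hne hbdd
  have hgm' : (uF μ gm).card = sSup S := hgm
  set M := sSup S with hM
  have hle : ∀ g' : Config (Fin 2) A, (uF μ g').card ≤ M :=
    fun g' => le_csSup hbdd (Set.mem_range_self g')
  have hsum := cnt hN gm gm
  rw [hgm'] at hsum
  have hub : ∑ d : A, (uF μ (graft d gm gm)).card ≤ ∑ _d : A, M :=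
    Finset.sum_le_sum (fun d _ => hle _)
  rw [hsum, Finset.sum_const, Finset.card_univ, smul_eq_mul] at hub
  have hMM : M * M ≤ M :=
    Nat.le_of_mul_le_mul_left hub Fintype.card_pos
  have hM1 : M ≤ 1 := by nlinarith
  exact le_trans (hle g) hM1

lemma uF_realizable (f : Config (Fin 2) A) [Nonempty A] :
    (uF μ (caMap 1 μ f)).card = 1 := by
  refine le_antisymm (uF_card_le_one hN _) ?_
  exact Finset.card_pos.mpr ⟨f [], mem_uF.mpr ⟨f, rfl, rfl⟩⟩

lemma exists_preimage_graft (f₀ f₁ : Config (Fin 2) A) (d : A) [Nonempty A] :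
    ∃ F : Config (Fin 2) A, caMap 1 μ F = graft d (caMap 1 μ f₀) (caMap 1 μ f₁) := by
  classical
  set g₀ := caMap 1 μ f₀
  set g₁ := caMap 1 μ f₁
  have hsum := cnt hN g₀ g₁
  rw [uF_realizable hN f₀, uF_realizable hN f₁, mul_one, mul_one] at hsum
  have hall : ∀ e : A, (uF μ (graft e g₀ g₁)).card = 1 := by
    by_contra hcon
    push_neg at hcon
    obtain ⟨e₀, he₀⟩ := hcon
    have h0 : (uF μ (graft e₀ g₀ g₁)).card = 0 := by
      have := uF_card_le_one hN (graft e₀ g₀ g₁)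
      omega
    have hlt : ∑ e : A, (uF μ (graft e g₀ g₁)).card < ∑ _e : A, 1 :=
      Finset.sum_lt_sum (fun e _ => uF_card_le_one hN _)
        ⟨e₀, Finset.mem_univ _, by omega⟩
    rw [hsum, Finset.sum_const, Finset.card_univ, smul_eq_mul, mul_one] at hlt
    omega
  have hpos : 0 < (uF μ (graft d g₀ g₁)).card := by rw [hall d]; omega
  obtain ⟨z, hz⟩ := Finset.card_pos.mp hpos
  obtain ⟨F, hF, -⟩ := mem_uF.mp hz
  exact ⟨F, hF⟩

lemma block_realizable [Nonempty A] :
    ∀ (n : ℕ) (q : Config (Fin 2) A),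
      ∃ f : Config (Fin 2) A, restrict (caMap 1 μ f) n = restrict q n := by
  intro n
  induction n with
  | zero =>
      intro q
      refine ⟨fun _ => Classical.arbitrary A, ?_⟩
      funext w
      exact absurd w.2 (by omega)
  | succ n ih =>
      intro q
      obtain ⟨f₀, h₀⟩ := ih (shift q [0])
      obtain ⟨f₁, h₁⟩ := ih (shift q [1])
      obtain ⟨F, hF⟩ := exists_preimage_graft hN f₀ f₁ (q [])
      refine ⟨F, ?_⟩
      funext w
      show caMap 1 μ F w.val = q w.val
      rw [hF]
      obtain ⟨l, hl⟩ := w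
      cases l with
      | nil => rfl
      | cons i v =>
          have hv : v.length < n := by simp at hl; omega
          show graft (q []) (caMap 1 μ f₀) (caMap 1 μ f₁) (i :: v) = q (i :: v)
          rw [graft_cons]
          fin_cases i
          · simpa [restrict, shift] using congrFun h₀ ⟨v, hv⟩
          · simpa [restrict, shift] using congrFun h₁ ⟨v, hv⟩

lemma tau_inj [Nonempty A] : Function.Injective (caMap 1 μ) := by
  intro f f' hc
  have h1 : f [] ∈ uF μ (caMap 1 μ f) := mem_uF.mpr ⟨f, rfl, rfl⟩
  have h2 : f' [] ∈ uF μ (caMap 1 μ f) := mem_uF.mpr ⟨f', hc.symm, rfl⟩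
  have hroot : f [] = f' [] :=
    Finset.card_le_one.mp (uF_card_le_one hN _) _ h1 _ h2
  exact rc_ext N hN f f' hroot hc

end Counting

end RC

lemma tau_cont [TopologicalSpace A] [DiscreteTopology A] : Continuous (caMap 1 μ) := by
  have hfin : Finite (Delta (Fin 2) (1 + 1)) := (List.finite_length_lt (Fin 2) 2).to_subtype
  apply continuous_pi
  intro v
  have hfac : (fun f : Config (Fin 2) A => caMap 1 μ f v)
      = (fun p : Delta (Fin 2) (1 + 1) → A => μ p)
        ∘ (fun (f : Config (Fin 2) A) (w : Delta (Fin 2) (1 + 1)) => f (v ++ w.val)) := rfl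
  rw [hfac]
  exact continuous_of_discreteTopology.comp
    (continuous_pi fun w => continuous_apply (v ++ w.val))

lemma tau_surj [Fintype A] [Nonempty A] [TopologicalSpace A] [DiscreteTopology A]
    {N : ℕ}
    (hN : ∀ (p : Delta (Fin 2) 1 → A) (q : Delta (Fin 2) (1 * N) → A),
    (∃ f : Config (Fin 2) A, restrict f 1 = p ∧ restrict (caMap 1 μ f) (1 * N) = q) →
    ∃! ps : {v : List (Fin 2) // v.length = 1} → Delta (Fin 2) 1 → A,
      ∀ f : Config (Fin 2) A, restrict f 1 = p → restrict (caMap 1 μ f) (1 * N) = q →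
        ∀ (v : {v : List (Fin 2) // v.length = 1}) (w : Delta (Fin 2) 1),
          f (v.val ++ w.val) = ps v w) :
    Function.Surjective (caMap 1 μ) := by
  intro g
  set K : ℕ → Set (Config (Fin 2) A) :=
    fun n => {f | restrict (caMap 1 μ f) n = restrict g n} with hK
  have hsub : ∀ n, K (n + 1) ⊆ K n := by
    intro n f hf
    funext w
    have := congrFun hf ⟨w.val, Nat.lt_succ_of_lt w.2⟩
    exact this
  have hne : ∀ n, (K n).Nonempty := by
    intro n
    obtain ⟨f, hf⟩ := block_realizable hN n g
    exact ⟨f, hf⟩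
  have hcl : ∀ n, IsClosed (K n) := by
    intro n
    have hKn : K n = ⋂ (w : Delta (Fin 2) n),
        {f : Config (Fin 2) A | caMap 1 μ f w.val = g w.val} := by
      ext f
      simp only [hK, Set.mem_setOf_eq, Set.mem_iInter, funext_iff]
      exact Iff.rfl
    rw [hKn]
    refine isClosed_iInter (fun w => ?_)
    have : {f : Config (Fin 2) A | caMap 1 μ f w.val = g w.val}
        = (fun f : Config (Fin 2) A => caMap 1 μ f w.val) ⁻¹' {g w.val} := by
      ext f; simp
    rw [this]
    exact IsClosed.preimage ((continuous_apply w.val).comp (tau_cont μ)) isClosed_singleton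
  obtain ⟨f, hf⟩ := IsCompact.nonempty_iInter_of_sequence_nonempty_isCompact_isClosed
    K hsub hne ((hcl 0).isCompact) hcl
  refine ⟨f, ?_⟩
  funext v
  have hmem := Set.mem_iInter.mp hf (v.length + 1)
  have := congrFun hmem ⟨v, Nat.lt_succ_self _⟩
  exact this

end RCopen


/-- right-closing CA of radius `1` on the binary tree are open maps. -/
theorem rightClosing_radius_one_open [Finite A] [Nonempty A]
    [TopologicalSpace A] [DiscreteTopology A]
    (μ : (Delta (Fin 2) (1 + 1) → A) → A) (h : RightClosing 1 μ) :
    IsOpenMap (caMap 1 μ) := by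
  classical
  cases nonempty_fintype A
  obtain ⟨N, hN⟩ := h
  have hbij : Function.Bijective (caMap 1 μ) :=
    ⟨RCopen.tau_inj hN, RCopen.tau_surj μ hN⟩
  let e : Config (Fin 2) A ≃ Config (Fin 2) A := Equiv.ofBijective _ hbij
  have hec : Continuous e := RCopen.tau_cont μ
  have hopen := (Continuous.homeoOfEquivCompactToT2 (f := e) hec).isOpenMap
  exact hopen
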